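/- The rapidly decreasing matrices form an algebra with submultiplicative-type seminorm estimates: if a, b : ℕ × ℕ → ℂ are rapidly decreasing matrices, then for all i, j ∈ ℕ the series Σ_{k=0}^∞ a(i,k)·b(k,j) converges absolutely, the product matrix (ab)(i,j) = Σ_{k=0}^∞ a(i,k)·b(k,j) is rapidly decreasing, and for all m, n ∈ ℕ one has ‖ab‖_{m,n} ≤ ‖a‖_{m,0}·‖b‖_{0,n}, where ‖a‖_{m,n} = Σ_{i,j} (1+i)^m (1+j)^n |a(i,j)| (these sums are finite for rapidly decreasing matrices). -/

import Mathlib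

/-- A matrix `a : ℕ × ℕ → ℂ` is rapidly decreasing (a smooth compact operator) if
`sup_{i,j} (1+i)^m (1+j)^n |a(i,j)| < ∞` for all `m, n`. -/
def RapidDecay (a : ℕ → ℕ → ℂ) : Prop :=
  ∀ m n : ℕ, ∃ C : ℝ, ∀ i j : ℕ,
    (1 + (i : ℝ)) ^ m * (1 + (j : ℝ)) ^ n * ‖a i j‖ ≤ C

/-- The seminorm `‖a‖_{m,n} = Σ_{i,j} (1+i)^m (1+j)^n |a(i,j)|`. -/
noncomputable def mnorm (m n : ℕ) (a : ℕ → ℕ → ℂ) : ℝ :=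
  ∑' p : ℕ × ℕ, (1 + (p.1 : ℝ)) ^ m * (1 + (p.2 : ℝ)) ^ n * ‖a p.1 p.2‖

lemma sumInv : Summable fun k : ℕ => ((1 + (k : ℝ)) ^ 2)⁻¹ := by
  have h : Summable fun n : ℕ => (((n : ℝ)) ^ 2)⁻¹ :=
    Real.summable_nat_pow_inv.mpr one_lt_two
  have h2 := (summable_nat_add_iff 1).mpr h
  refine h2.congr fun n => ?_
  push_cast
  ring_nf

lemma summable_weight (a : ℕ → ℕ → ℂ) (ha : RapidDecay a) (m n : ℕ) :
    Summable fun p : ℕ × ℕ =>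
      (1 + (p.1 : ℝ)) ^ m * (1 + (p.2 : ℝ)) ^ n * ‖a p.1 p.2‖ := by
  obtain ⟨C, hC⟩ := ha (m + 2) (n + 2)
  have hs : Summable fun p : ℕ × ℕ =>
      C * (((1 + (p.1 : ℝ)) ^ 2)⁻¹ * ((1 + (p.2 : ℝ)) ^ 2)⁻¹) :=
    (sumInv.mul_of_nonneg sumInv (fun _ => by positivity) (fun _ => by positivity)).mul_left C
  refine hs.of_nonneg_of_le (fun p => by positivity) fun p => ?_
  have key := hC p.1 p.2
  have h1 : (0:ℝ) < 1 + p.1 := by positivity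
  have h2 : (0:ℝ) < 1 + p.2 := by positivity
  rw [show C * (((1 + (p.1 : ℝ)) ^ 2)⁻¹ * ((1 + (p.2 : ℝ)) ^ 2)⁻¹)
      = C / ((1 + (p.1 : ℝ)) ^ 2 * (1 + (p.2 : ℝ)) ^ 2) by
        rw [div_eq_mul_inv, mul_inv],
    le_div_iff₀ (by positivity)]
  calc (1 + (p.1 : ℝ)) ^ m * (1 + (p.2 : ℝ)) ^ n * ‖a p.1 p.2‖
        * ((1 + (p.1 : ℝ)) ^ 2 * (1 + (p.2 : ℝ)) ^ 2)
      = (1 + (p.1 : ℝ)) ^ (m + 2) * (1 + (p.2 : ℝ)) ^ (n + 2) * ‖a p.1 p.2‖ := by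
        ring
    _ ≤ C := key

/-- summability in `k` of `(1+i)^m |a i k| * (1+j)^n |b k j|`. -/
lemma summable_k (a b : ℕ → ℕ → ℂ) (ha : RapidDecay a) (hb : RapidDecay b)
    (m n i j : ℕ) :
    Summable fun k : ℕ =>
      ((1 + (i : ℝ)) ^ m * ‖a i k‖) * ((1 + (j : ℝ)) ^ n * ‖b k j‖) := by
  obtain ⟨Ca, hCa⟩ := ha m 2
  obtain ⟨Cb, hCb⟩ := hb 0 n
  have hCb0 : 0 ≤ Cb := le_trans (by positivity) (hCb 0 0)
  have hs : Summable fun k : ℕ => Ca * ((1 + (k : ℝ)) ^ 2)⁻¹ * Cb :=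
    (sumInv.mul_left Ca).mul_right Cb
  refine hs.of_nonneg_of_le (fun k => by positivity) fun k => ?_
  have h1 : (1 + (i : ℝ)) ^ m * ‖a i k‖ ≤ Ca * ((1 + (k : ℝ)) ^ 2)⁻¹ := by
    rw [show Ca * ((1 + (k : ℝ)) ^ 2)⁻¹ = Ca / (1 + (k : ℝ)) ^ 2 by ring,
      le_div_iff₀ (by positivity)]
    calc (1 + (i : ℝ)) ^ m * ‖a i k‖ * (1 + (k : ℝ)) ^ 2
        = (1 + (i : ℝ)) ^ m * (1 + (k : ℝ)) ^ 2 * ‖a i k‖ := by ring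
      _ ≤ Ca := hCa i k
  have h2 : (1 + (j : ℝ)) ^ n * ‖b k j‖ ≤ Cb := by
    have := hCb k j
    simpa using this
  exact mul_le_mul h1 h2 (by positivity) (le_trans (by positivity) h1)

theorem stmt11 (a b : ℕ → ℕ → ℂ) (ha : RapidDecay a) (hb : RapidDecay b) :
    (∀ i j : ℕ, Summable fun k : ℕ => ‖a i k * b k j‖) ∧
    RapidDecay (fun i j => ∑' k : ℕ, a i k * b k j) ∧
    (∀ m n : ℕ,
      mnorm m n (fun i j => ∑' k : ℕ, a i k * b k j) ≤ mnorm m 0 a * mnorm 0 n b) := by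
  -- Part 1
  have part1 : ∀ i j : ℕ, Summable fun k : ℕ => ‖a i k * b k j‖ := by
    intro i j
    refine (summable_k a b ha hb 0 0 i j).congr fun k => ?_
    simp [map_mul]
  -- a general pointwise bound used in parts 2 and 3
  have keybound : ∀ m n i j : ℕ,
      (1 + (i : ℝ)) ^ m * (1 + (j : ℝ)) ^ n * ‖∑' k : ℕ, a i k * b k j‖
        ≤ ∑' k : ℕ, ((1 + (i : ℝ)) ^ m * ‖a i k‖)
            * ((1 + (j : ℝ)) ^ n * ‖b k j‖) := by
    intro m n i j
    have hsum : Summable fun k : ℕ => ‖a i k * b k j‖ := by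
      refine (part1 i j).congr fun k => ?_
      simp
    have habs : ‖∑' k : ℕ, a i k * b k j‖
        ≤ ∑' k : ℕ, ‖a i k * b k j‖ := by
      simpa using norm_tsum_le_tsum_norm hsum
    calc (1 + (i : ℝ)) ^ m * (1 + (j : ℝ)) ^ n * ‖∑' k : ℕ, a i k * b k j‖
        ≤ (1 + (i : ℝ)) ^ m * (1 + (j : ℝ)) ^ n * ∑' k : ℕ, ‖a i k * b k j‖ := by
          gcongr
      _ = ∑' k : ℕ, ((1 + (i : ℝ)) ^ m * ‖a i k‖)
            * ((1 + (j : ℝ)) ^ n * ‖b k j‖) := by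
          rw [← tsum_mul_left]
          refine tsum_congr fun k => ?_
          rw [norm_mul]
          ring
  -- Part 2
  have part2 : RapidDecay (fun i j => ∑' k : ℕ, a i k * b k j) := by
    intro m n
    obtain ⟨Ca, hCa⟩ := ha m 2
    obtain ⟨Cb, hCb⟩ := hb 0 n
    have hCa0 : 0 ≤ Ca := le_trans (by positivity) (hCa 0 0)
    have hCb0 : 0 ≤ Cb := le_trans (by positivity) (hCb 0 0)
    refine ⟨Ca * Cb * ∑' k : ℕ, ((1 + (k : ℝ)) ^ 2)⁻¹, fun i j => ?_⟩
    refine le_trans (keybound m n i j) ?_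
    have hle : ∀ k : ℕ,
        ((1 + (i : ℝ)) ^ m * ‖a i k‖) * ((1 + (j : ℝ)) ^ n * ‖b k j‖)
          ≤ Ca * Cb * ((1 + (k : ℝ)) ^ 2)⁻¹ := by
      intro k
      have h1 : (1 + (i : ℝ)) ^ m * ‖a i k‖ ≤ Ca * ((1 + (k : ℝ)) ^ 2)⁻¹ := by
        rw [show Ca * ((1 + (k : ℝ)) ^ 2)⁻¹ = Ca / (1 + (k : ℝ)) ^ 2 by ring,
          le_div_iff₀ (by positivity)]
        calc (1 + (i : ℝ)) ^ m * ‖a i k‖ * (1 + (k : ℝ)) ^ 2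
            = (1 + (i : ℝ)) ^ m * (1 + (k : ℝ)) ^ 2 * ‖a i k‖ := by ring
          _ ≤ Ca := hCa i k
      have h2 : (1 + (j : ℝ)) ^ n * ‖b k j‖ ≤ Cb := by simpa using hCb k j
      calc ((1 + (i : ℝ)) ^ m * ‖a i k‖) * ((1 + (j : ℝ)) ^ n * ‖b k j‖)
          ≤ (Ca * ((1 + (k : ℝ)) ^ 2)⁻¹) * Cb :=
            mul_le_mul h1 h2 (by positivity) (le_trans (by positivity) h1)
        _ = Ca * Cb * ((1 + (k : ℝ)) ^ 2)⁻¹ := by ring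
    calc (∑' k : ℕ, ((1 + (i : ℝ)) ^ m * ‖a i k‖)
            * ((1 + (j : ℝ)) ^ n * ‖b k j‖))
        ≤ ∑' k : ℕ, Ca * Cb * ((1 + (k : ℝ)) ^ 2)⁻¹ :=
          Summable.tsum_le_tsum hle (summable_k a b ha hb m n i j) (sumInv.mul_left (Ca * Cb))
      _ = Ca * Cb * ∑' k : ℕ, ((1 + (k : ℝ)) ^ 2)⁻¹ := tsum_mul_left
  refine ⟨part1, part2, ?_⟩
  -- Part 3
  intro m n
  set c : ℕ → ℕ → ℂ := fun i j => ∑' k : ℕ, a i k * b k j with hc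
  set fA : ℕ × ℕ → ENNReal := fun p =>
    ENNReal.ofReal ((1 + (p.1 : ℝ)) ^ m * (1 + (p.2 : ℝ)) ^ 0 * ‖a p.1 p.2‖) with hfA
  set fB : ℕ × ℕ → ENNReal := fun p =>
    ENNReal.ofReal ((1 + (p.1 : ℝ)) ^ 0 * (1 + (p.2 : ℝ)) ^ n * ‖b p.1 p.2‖) with hfB
  -- identify ENNReal sums of fA, fB with the mnorms
  have hA : ENNReal.ofReal (mnorm m 0 a) = ∑' p : ℕ × ℕ, fA p := by
    rw [mnorm]
    exact ENNReal.ofReal_tsum_of_nonneg (fun p => by positivity) (summable_weight a ha m 0)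
  have hB : ENNReal.ofReal (mnorm 0 n b) = ∑' p : ℕ × ℕ, fB p := by
    rw [mnorm]
    exact ENNReal.ofReal_tsum_of_nonneg (fun p => by positivity) (summable_weight b hb 0 n)
  -- pointwise bound in ENNReal
  have hpoint : ∀ p : ℕ × ℕ,
      ENNReal.ofReal ((1 + (p.1 : ℝ)) ^ m * (1 + (p.2 : ℝ)) ^ n * ‖c p.1 p.2‖)
        ≤ ∑' k : ℕ, fA (p.1, k) * fB (k, p.2) := by
    intro p
    have h1 := keybound m n p.1 p.2
    have h2 : ENNReal.ofReal (∑' k : ℕ, ((1 + (p.1 : ℝ)) ^ m * ‖a p.1 k‖)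
        * ((1 + (p.2 : ℝ)) ^ n * ‖b k p.2‖))
        = ∑' k : ℕ, fA (p.1, k) * fB (k, p.2) := by
      rw [ENNReal.ofReal_tsum_of_nonneg (fun k => by positivity)
        (summable_k a b ha hb m n p.1 p.2)]
      refine tsum_congr fun k => ?_
      rw [ENNReal.ofReal_mul (by positivity)]
      simp [hfA, hfB]
    calc ENNReal.ofReal ((1 + (p.1 : ℝ)) ^ m * (1 + (p.2 : ℝ)) ^ n * ‖c p.1 p.2‖)
        ≤ ENNReal.ofReal (∑' k : ℕ, ((1 + (p.1 : ℝ)) ^ m * ‖a p.1 k‖)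
            * ((1 + (p.2 : ℝ)) ^ n * ‖b k p.2‖)) := ENNReal.ofReal_le_ofReal h1
      _ = _ := h2
  -- the triple sum estimate in ENNReal
  have hAcur : (∑' p : ℕ × ℕ, fA p) = ∑' (i : ℕ) (k : ℕ), fA (i, k) :=
    ENNReal.tsum_prod (f := fun i k => fA (i, k))
  have hBcur : (∑' p : ℕ × ℕ, fB p) = ∑' (k : ℕ) (j : ℕ), fB (k, j) :=
    ENNReal.tsum_prod (f := fun k j => fB (k, j))
  have htriple : (∑' p : ℕ × ℕ, ∑' k : ℕ, fA (p.1, k) * fB (k, p.2))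
      ≤ (∑' p : ℕ × ℕ, fA p) * (∑' p : ℕ × ℕ, fB p) := by
    calc (∑' p : ℕ × ℕ, ∑' k : ℕ, fA (p.1, k) * fB (k, p.2))
        = ∑' (i : ℕ) (j : ℕ) (k : ℕ), fA (i, k) * fB (k, j) :=
          ENNReal.tsum_prod (f := fun i j => ∑' k : ℕ, fA (i, k) * fB (k, j))
      _ = ∑' i : ℕ, ∑' k : ℕ, fA (i, k) * ∑' j : ℕ, fB (k, j) := by
          refine tsum_congr fun i => ?_
          rw [ENNReal.tsum_comm]
          exact tsum_congr fun k => ENNReal.tsum_mul_left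
      _ ≤ ∑' i : ℕ, ∑' k : ℕ, fA (i, k) * ∑' p : ℕ × ℕ, fB p := by
          refine ENNReal.tsum_le_tsum fun i => ENNReal.tsum_le_tsum fun k => ?_
          refine mul_le_mul_right ?_ _
          rw [hBcur]
          exact ENNReal.le_tsum k
      _ = (∑' i : ℕ, ∑' k : ℕ, fA (i, k)) * ∑' p : ℕ × ℕ, fB p := by
          rw [← ENNReal.tsum_mul_right]
          exact tsum_congr fun i => ENNReal.tsum_mul_right
      _ = (∑' p : ℕ × ℕ, fA p) * ∑' p : ℕ × ℕ, fB p := by rw [hAcur]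
  -- put it together
  have hcsum : Summable fun p : ℕ × ℕ =>
      (1 + (p.1 : ℝ)) ^ m * (1 + (p.2 : ℝ)) ^ n * ‖c p.1 p.2‖ :=
    summable_weight c part2 m n
  have hofc : ENNReal.ofReal (mnorm m n c)
      = ∑' p : ℕ × ℕ, ENNReal.ofReal
          ((1 + (p.1 : ℝ)) ^ m * (1 + (p.2 : ℝ)) ^ n * ‖c p.1 p.2‖) := by
    rw [mnorm]
    exact ENNReal.ofReal_tsum_of_nonneg (fun p => by positivity) hcsum
  have hmain : ENNReal.ofReal (mnorm m n c)
      ≤ ENNReal.ofReal (mnorm m 0 a) * ENNReal.ofReal (mnorm 0 n b) := by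
    rw [hofc, hA, hB]
    exact le_trans (ENNReal.tsum_le_tsum hpoint) htriple
  have hfin : ENNReal.ofReal (mnorm m 0 a) * ENNReal.ofReal (mnorm 0 n b) ≠ ⊤ :=
    ENNReal.mul_ne_top ENNReal.ofReal_ne_top ENNReal.ofReal_ne_top
  have hnn : ∀ (m' n' : ℕ) (x : ℕ → ℕ → ℂ), 0 ≤ mnorm m' n' x := fun m' n' x =>
    tsum_nonneg fun p => by positivity
  have := ENNReal.toReal_mono hfin hmain
  rw [ENNReal.toReal_ofReal (hnn m n c), ENNReal.toReal_mul,
    ENNReal.toReal_ofReal (hnn m 0 a), ENNReal.toReal_ofReal (hnn 0 n b)] at this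
  exact this
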